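/- Let k be a number field and let x = (x₁, x₂) be a pair of 2×2 matrices over k. Then the binary quadratic form F_x(X,Y) = det(X·x₁ + Y·x₂) is irreducible as an element of the polynomial ring k[X,Y] if and only if x is k-stable, i.e., for every g = (g₁,g₂,g₃) ∈ GL₂(k) × GL₂(k) × GL₂(k) the convex hull in ℝ³ of the finite set of weight vectors { (ε_j, ε_k, ε_i) : 1 ≤ i,j,k ≤ 2 and the (j,k) entry of (g·x)_i is nonzero } contains a neighborhood of the origin of ℝ³, where ε_1 = 1 and ε_2 = −1. (This is Theorem (2.1) for the D₄ case, in which the set L₀ of semistable points with semisimple identity-component stabilizer equals the set of x with F_x irreducible.) -/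

import Mathlib

open Matrix MvPolynomial

private noncomputable def quadP {K : Type*} [Field K] (a b c : K) : MvPolynomial (Fin 2) K :=
  C a * X 0 ^ 2 + C b * (X 0 * X 1) + C c * X 1 ^ 2

private lemma eval_quadP {K : Type*} [Field K] (a b c : K) (v : Fin 2 → K) :
    eval v (quadP a b c) = a * v 0 ^ 2 + b * (v 0 * v 1) + c * v 1 ^ 2 := by
  simp [quadP]

private lemma not_irr_of_root {K : Type*} [Field K] {a b c : K} (v : Fin 2 → K)
    (hv : v ≠ 0) (h : a * v 0 ^ 2 + b * (v 0 * v 1) + c * v 1 ^ 2 = 0) :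
    ¬ Irreducible (quadP a b c) := by
  intro hirr
  have keyUnit : ∀ p : MvPolynomial (Fin 2) K, eval (0 : Fin 2 → K) p = 0 → ¬ IsUnit p := by
    intro p hp hu
    have := hu.map (eval (0 : Fin 2 → K))
    rw [hp] at this
    exact this.ne_zero rfl
  by_cases hv1 : v 1 = 0
  · have hv0 : v 0 ≠ 0 := by
      intro h0; apply hv; funext i; fin_cases i <;> simp [h0, hv1]
    have ha : a = 0 := by
      have : a * v 0 ^ 2 = 0 := by rw [hv1] at h; simpa using h
      rcases mul_eq_zero.mp this with h' | h'
      · exact h'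
      · exact absurd h' (pow_ne_zero _ hv0)
    have hfac : quadP a b c = X 1 * (C b * X 0 + C c * X 1) := by
      rw [quadP, ha]; ring_nf; simp
    rcases hirr.isUnit_or_isUnit hfac with hu | hu
    · exact keyUnit _ (by simp) hu
    · exact keyUnit _ (by simp) hu
  · set t : K := v 0 / v 1 with ht
    have hq : a * t ^ 2 + b * t + c = 0 := by
      rw [ht]
      field_simp
      linear_combination h
    have hfac : quadP a b c = (X 0 - C t * X 1) * (C a * X 0 + C (b + a * t) * X 1) := by
      have hc' : c = -(a * t ^ 2 + b * t) := by linear_combination hq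
      rw [quadP, hc']
      simp only [C_add, C_mul, C_neg, C_pow]
      ring
    rcases hirr.isUnit_or_isUnit hfac with hu | hu
    · exact keyUnit _ (by simp) hu
    · exact keyUnit _ (by simp) hu

private lemma root_of_not_irr {K : Type*} [Field K] [Infinite K] {a b c : K}
    (h : ¬ Irreducible (quadP a b c)) :
    ∃ v : Fin 2 → K, v ≠ 0 ∧ a * v 0 ^ 2 + b * (v 0 * v 1) + c * v 1 ^ 2 = 0 := by
  have e10 : (![1, 0] : Fin 2 → K) ≠ 0 := by
    intro h0; have := congrFun h0 0; simpa using this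
  by_cases ha : a = 0
  · exact ⟨![1, 0], e10, by simp [ha]⟩
  have hq0 : quadP a b c ≠ 0 := by
    intro h0
    have := eval_quadP a b c ![1, 0]
    rw [h0] at this; simp at this; exact ha this.symm
  have hnu : ¬ IsUnit (quadP a b c) := by
    intro hu
    have := hu.map (eval (0 : Fin 2 → K))
    rw [eval_quadP] at this; simp at this
  obtain ⟨P, Q, hPQ, hP, hQ⟩ :
      ∃ P Q, quadP a b c = P * Q ∧ ¬IsUnit P ∧ ¬IsUnit Q := by
    by_contra hcon
    push_neg at hcon
    exact h (irreducible_iff.mpr ⟨hnu, fun P Q hpq =>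
      or_iff_not_imp_left.mpr (hcon P Q hpq)⟩)
  set e := MvPolynomial.finSuccEquiv K 1 with he
  have hone : (1 : Fin 2) = Fin.succ 0 := rfl
  have hC : ∀ r : K, e (C r) = Polynomial.C (C r) := by
    intro r
    rw [he, finSuccEquiv_apply, eval₂Hom_C]
    rfl
  have hf : e (quadP a b c) =
      Polynomial.C (C a) * Polynomial.X ^ 2 +
        Polynomial.C (C b * X 0) * Polynomial.X +
        Polynomial.C (C c * X 0 ^ 2) := by
    rw [quadP, hone]
    simp only [he, _root_.map_add, _root_.map_mul, map_pow, hC, finSuccEquiv_X_zero,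
      finSuccEquiv_X_succ]
    rw [← he, hC, hC, hC]
    ring
  have hCa : (C a : MvPolynomial (Fin 1) K) ≠ 0 := by
    simpa using ha
  have hfd : (e (quadP a b c)).natDegree = 2 := by
    rw [hf]; exact Polynomial.natDegree_quadratic hCa
  have hP0 : P ≠ 0 := by rintro rfl; rw [zero_mul] at hPQ; exact hq0 hPQ
  have hQ0 : Q ≠ 0 := by rintro rfl; rw [mul_zero] at hPQ; exact hq0 hPQ
  have heP0 : e P ≠ 0 := by simpa using hP0
  have heQ0 : e Q ≠ 0 := by simpa using hQ0
  have hsum : (e P).natDegree + (e Q).natDegree = 2 := by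
    rw [← Polynomial.natDegree_mul heP0 heQ0, ← _root_.map_mul, ← hPQ, hfd]
  have key : ∀ P' Q' : MvPolynomial (Fin 2) K, quadP a b c = P' * Q' →
      (e P').natDegree = 0 → IsUnit P' := by
    intro P' Q' hPQ' hd0
    have hp' : e P' = Polynomial.C ((e P').coeff 0) :=
      Polynomial.eq_C_of_natDegree_eq_zero hd0
    have hcoeff : (e P').coeff 0 * (e Q').coeff 2 = C a := by
      have h2 : (e (quadP a b c)).coeff 2 = C a := by
        rw [hf, Polynomial.coeff_add, Polynomial.coeff_add, Polynomial.coeff_C_mul,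
          Polynomial.coeff_C_mul, Polynomial.coeff_X_pow, Polynomial.coeff_X,
          Polynomial.coeff_C]
        norm_num
      rw [hPQ', _root_.map_mul, hp', Polynomial.coeff_C_mul] at h2
      exact h2
    have hu : IsUnit ((e P').coeff 0) :=
      isUnit_of_dvd_unit ⟨(e Q').coeff 2, hcoeff.symm⟩
        ((isUnit_iff_ne_zero.mpr ha).map (C : K →+* MvPolynomial (Fin 1) K))
    have h1 : IsUnit (e P') := hp' ▸ Polynomial.isUnit_C.mpr hu
    have h2 := h1.map e.symm
    rwa [AlgEquiv.symm_apply_apply] at h2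
  have hd : (e P).natDegree = 0 ∨ (e P).natDegree = 1 ∨ (e P).natDegree = 2 := by omega
  rcases hd with hd0 | hd1 | hd2
  · exact absurd (key P Q hPQ hd0) hP
  · -- linear case: produce a root
    have hr : (e P).coeff 1 ≠ 0 := by
      have hlc := Polynomial.leadingCoeff_ne_zero.mpr heP0
      rwa [Polynomial.leadingCoeff, hd1] at hlc
    obtain ⟨z, hz⟩ : ∃ z : Fin 1 → K, eval z (X 0 * (e P).coeff 1) ≠ 0 := by
      by_contra hall
      push_neg at hall
      have hzero : (X 0 * (e P).coeff 1 : MvPolynomial (Fin 1) K) = 0 :=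
        MvPolynomial.funext (fun z => by rw [hall z, map_zero])
      exact mul_ne_zero (X_ne_zero 0) hr hzero
    rw [_root_.map_mul, eval_X] at hz
    have hz0 : z 0 ≠ 0 := fun h0 => hz (by rw [h0, zero_mul])
    have hzr : eval z ((e P).coeff 1) ≠ 0 := fun h0 => hz (by rw [h0, mul_zero])
    set y : K := -(eval z ((e P).coeff 0)) / eval z ((e P).coeff 1) with hy
    refine ⟨Fin.cons y z, ?_, ?_⟩
    · intro h0
      have h1 := congrFun h0 1
      rw [hone, Fin.cons_succ] at h1
      exact hz0 h1
    · have hvq : eval (Fin.cons y z) (quadP a b c) = 0 := by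
        rw [hPQ, _root_.map_mul]
        have hevP : eval (Fin.cons y z) P = 0 := by
          rw [MvPolynomial.eval_eq_eval_mv_eval']
          have hp1 : e P = Polynomial.C ((e P).coeff 1) * Polynomial.X +
              Polynomial.C ((e P).coeff 0) :=
            Polynomial.eq_X_add_C_of_natDegree_le_one (le_of_eq hd1)
          rw [show MvPolynomial.finSuccEquiv K 1 P = e P from rfl, hp1]
          simp only [Polynomial.map_add, Polynomial.map_mul, Polynomial.map_C, Polynomial.map_X,
            Polynomial.eval_add, Polynomial.eval_mul, Polynomial.eval_C, Polynomial.eval_X]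
          rw [hy]
          field_simp
          ring
        rw [hevP, zero_mul]
      rw [← eval_quadP a b c, hvq]
  · have hq0' : (e Q).natDegree = 0 := by omega
    exact absurd (key Q P (by rw [hPQ, mul_comm]) hq0') hQ

private lemma mem_hull_pair {S : Set (Fin 3 → ℝ)} {p q r : Fin 3 → ℝ}
    (hp : p ∈ S) (hq : q ∈ S) (h : r = (1/2 : ℝ) • p + (1/2 : ℝ) • q) :
    r ∈ convexHull ℝ S := by
  rw [h]
  exact (convex_convexHull ℝ S) (subset_convexHull ℝ S hp) (subset_convexHull ℝ S hq)
    (by norm_num) (by norm_num) (by norm_num)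

private lemma nhds_of_pm_basis {S : Set (Fin 3 → ℝ)}
    (h : ∀ i : Fin 3, (fun j => if j = i then (1:ℝ) else 0) ∈ convexHull ℝ S ∧
        (fun j => if j = i then (-1:ℝ) else 0) ∈ convexHull ℝ S) :
    convexHull ℝ S ∈ nhds (0 : Fin 3 → ℝ) := by
  have hball : Metric.ball (0 : Fin 3 → ℝ) (1/4) ⊆ convexHull ℝ S := by
    intro w hw
    have habs : ∀ j : Fin 3, |w j| < 1/4 := by
      intro j
      have h1 := dist_le_pi_dist w 0 j
      have h2 : dist w 0 < 1/4 := Metric.mem_ball.mp hw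
      rw [Real.dist_eq] at h1
      simpa using lt_of_le_of_lt h1 h2
    set s : ℝ := (1 - (|w 0| + |w 1| + |w 2|)) / 6 with hs
    have hsnn : 0 ≤ s := by
      have h0 := habs 0; have h1 := habs 1; have h2 := habs 2
      rw [hs]; linarith
    set W : Fin 3 × Bool → ℝ := fun p =>
      (if p.2 then (|w p.1| + w p.1) / 2 else (|w p.1| - w p.1) / 2) + s with hW
    set z : Fin 3 × Bool → (Fin 3 → ℝ) := fun p =>
      fun j => if j = p.1 then (if p.2 then (1:ℝ) else -1) else 0 with hz
    have hWnn : ∀ p ∈ (Finset.univ : Finset (Fin 3 × Bool)), 0 ≤ W p := by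
      rintro ⟨i, b⟩ -
      have := abs_nonneg (w i)
      have := neg_abs_le (w i)
      have := le_abs_self (w i)
      rw [hW]
      cases b <;> simp <;> linarith
    have hWsum : ∑ p : Fin 3 × Bool, W p = 1 := by
      rw [Fintype.sum_prod_type]
      simp only [Fintype.sum_bool, hW, Fin.sum_univ_three, if_true, Bool.false_eq_true,
        if_false]
      rw [hs]; ring
    have hmem : ∀ p ∈ (Finset.univ : Finset (Fin 3 × Bool)), z p ∈ convexHull ℝ S := by
      rintro ⟨i, b⟩ -
      cases b
      · exact (h i).2
      · exact (h i).1
    have := (convex_convexHull ℝ S).sum_mem hWnn hWsum hmem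
    have heq : ∑ p : Fin 3 × Bool, W p • z p = w := by
      funext j
      rw [Fintype.sum_prod_type]
      simp only [Fintype.sum_bool, Finset.sum_apply, Pi.smul_apply, smul_eq_mul, hW, hz,
        if_true, Bool.false_eq_true, if_false]
      fin_cases j <;> simp [Fin.sum_univ_three] <;> ring
    rwa [heq] at this
  exact Filter.mem_of_superset (Metric.ball_mem_nhds 0 (by norm_num)) hball

private def qA {K : Type*} [Field K] (x : Fin 2 → Matrix (Fin 2) (Fin 2) K) : K :=
  x 0 0 0 * x 0 1 1 - x 0 0 1 * x 0 1 0
private def qB {K : Type*} [Field K] (x : Fin 2 → Matrix (Fin 2) (Fin 2) K) : K :=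
  x 0 0 0 * x 1 1 1 + x 1 0 0 * x 0 1 1 - x 0 0 1 * x 1 1 0 - x 1 0 1 * x 0 1 0
private def qC {K : Type*} [Field K] (x : Fin 2 → Matrix (Fin 2) (Fin 2) K) : K :=
  x 1 0 0 * x 1 1 1 - x 1 0 1 * x 1 1 0

private lemma det_pair {K : Type*} [Field K] (x : Fin 2 → Matrix (Fin 2) (Fin 2) K)
    (u : Fin 2 → K) :
    ((u 0 • x 0 + u 1 • x 1) : Matrix (Fin 2) (Fin 2) K).det
      = qA x * u 0 ^ 2 + qB x * (u 0 * u 1) + qC x * u 1 ^ 2 := by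
  rw [Matrix.det_fin_two]
  simp only [Matrix.add_apply, Matrix.smul_apply, smul_eq_mul, qA, qB, qC]
  ring

private lemma F_eq {K : Type*} [Field K] (x : Fin 2 → Matrix (Fin 2) (Fin 2) K) :
    (Matrix.of fun a b =>
        (X 0 : MvPolynomial (Fin 2) K) * C (x 0 a b) + X 1 * C (x 1 a b)).det
      = quadP (qA x) (qB x) (qC x) := by
  rw [Matrix.det_fin_two, quadP]
  simp only [Matrix.of_apply, qA, qB, qC, C_sub, C_add, C_mul]
  ring


set_option maxHeartbeats 2000000 in
/-- Theorem (2.1), `D₄` case: for a pair `x = (x₁, x₂)` of `2×2` matrices over a number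
field `K`, the binary quadratic form `F_x(X,Y) = det(X·x₁ + Y·x₂)` is irreducible in
`K[X,Y]` if and only if `x` is `K`-stable: for every
`g = (g₁, g₂, g₃) ∈ GL₂(K) × GL₂(K) × GL₂(K)`, the convex hull of the weight vectors
`(ε_j, ε_k, ε_i)` (with `ε₁ = 1`, `ε₂ = -1`) of the nonvanishing coordinates of `g·x`
contains a neighborhood of the origin of `ℝ³`.  Here
`(g·x)_i = g₁ · (∑ j, (g₃)_{ij} x_j) · g₂ᵀ`, which encodes
`M_{g·x}(v) = g₁ · M_x(v·g₃) · g₂ᵀ`. -/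
theorem irreducible_iff_kStable_D4 {K : Type*} [Field K] [NumberField K]
    (x : Fin 2 → Matrix (Fin 2) (Fin 2) K) :
    Irreducible ((Matrix.of fun a b =>
        (X 0 : MvPolynomial (Fin 2) K) * C (x 0 a b) + X 1 * C (x 1 a b)).det) ↔
      ∀ g₁ g₂ g₃ : GL (Fin 2) K,
        convexHull ℝ
          {w : Fin 3 → ℝ | ∃ i j l : Fin 2,
            ((g₁ : Matrix (Fin 2) (Fin 2) K) *
                (∑ j', (g₃ : Matrix (Fin 2) (Fin 2) K) i j' • x j') *
                (g₂ : Matrix (Fin 2) (Fin 2) K)ᵀ) j l ≠ 0 ∧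
              w = ![if j = 0 then (1 : ℝ) else -1, if l = 0 then (1 : ℝ) else -1,
                if i = 0 then (1 : ℝ) else -1]} ∈ nhds (0 : Fin 3 → ℝ) := by
  rw [F_eq]
  constructor
  · intro hirr g₁ g₂ g₃
    set y : Fin 2 → Matrix (Fin 2) (Fin 2) K := fun i =>
      (g₁ : Matrix (Fin 2) (Fin 2) K) * (∑ j', (g₃ : Matrix (Fin 2) (Fin 2) K) i j' • x j') *
        (g₂ : Matrix (Fin 2) (Fin 2) K)ᵀ with hy
    have hmem : ∀ i j l : Fin 2, y i j l ≠ 0 →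
        (![if j = 0 then (1 : ℝ) else -1, if l = 0 then (1 : ℝ) else -1,
            if i = 0 then (1 : ℝ) else -1]) ∈
          {w : Fin 3 → ℝ | ∃ i j l : Fin 2,
            ((g₁ : Matrix (Fin 2) (Fin 2) K) *
                (∑ j', (g₃ : Matrix (Fin 2) (Fin 2) K) i j' • x j') *
                (g₂ : Matrix (Fin 2) (Fin 2) K)ᵀ) j l ≠ 0 ∧
              w = ![if j = 0 then (1 : ℝ) else -1, if l = 0 then (1 : ℝ) else -1,
                if i = 0 then (1 : ℝ) else -1]} :=
      fun i j l h => ⟨i, j, l, h, rfl⟩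
    have noroot : ∀ v : Fin 2 → K, v ≠ 0 → (v 0 • y 0 + v 1 • y 1).det ≠ 0 := by
      intro v hv hdet
      set u : Fin 2 → K := fun jj =>
        v 0 * (g₃ : Matrix (Fin 2) (Fin 2) K) 0 jj +
          v 1 * (g₃ : Matrix (Fin 2) (Fin 2) K) 1 jj with hu
      have hmat : v 0 • y 0 + v 1 • y 1 =
          (g₁ : Matrix (Fin 2) (Fin 2) K) * (u 0 • x 0 + u 1 • x 1) *
            (g₂ : Matrix (Fin 2) (Fin 2) K)ᵀ := by
        ext a b
        simp only [hy, hu, Matrix.mul_apply, Matrix.add_apply, Matrix.smul_apply, smul_eq_mul,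
          Matrix.transpose_apply, Fin.sum_univ_two, Pi.add_apply, Pi.smul_apply]
        ring
      rw [hmat, Matrix.det_mul, Matrix.det_mul] at hdet
      have hg1 : ((g₁ : Matrix (Fin 2) (Fin 2) K)).det ≠ 0 :=
        ((Matrix.isUnit_iff_isUnit_det _).mp g₁.isUnit).ne_zero
      have hg2 : ((g₂ : Matrix (Fin 2) (Fin 2) K)ᵀ).det ≠ 0 := by
        rw [Matrix.det_transpose]
        exact ((Matrix.isUnit_iff_isUnit_det _).mp g₂.isUnit).ne_zero
      have hmid : (u 0 • x 0 + u 1 • x 1).det = 0 := by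
        rcases mul_eq_zero.mp hdet with h' | h'
        · rcases mul_eq_zero.mp h' with h'' | h''
          · exact absurd h'' hg1
          · exact h''
        · exact absurd h' hg2
      have hune : u ≠ 0 := by
        intro h0
        apply hv
        have hveq : Matrix.vecMul v ((g₃ : Matrix (Fin 2) (Fin 2) K)) = u := by
          funext jj
          simp [Matrix.vecMul, dotProduct, Fin.sum_univ_two, hu]
        have h2 : Matrix.vecMul (Matrix.vecMul v ((g₃ : Matrix (Fin 2) (Fin 2) K)))
            ((↑(g₃⁻¹) : Matrix (Fin 2) (Fin 2) K)) = v := by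
          rw [Matrix.vecMul_vecMul]
          rw [show ((g₃ : Matrix (Fin 2) (Fin 2) K)) * ((↑(g₃⁻¹) : Matrix (Fin 2) (Fin 2) K)) = 1
            from g₃.mul_inv]
          simp
        rw [hveq, h0] at h2
        rw [← h2]
        simp
      exact not_irr_of_root u hune (by rw [← det_pair]; exact hmid) hirr
    have hd0 : (y 0).det ≠ 0 := by
      have h10 : (![1, 0] : Fin 2 → K) ≠ 0 := by
        intro h0; have := congrFun h0 0; simpa using this
      have := noroot ![1, 0] h10
      simpa using this
    have hd1 : (y 1).det ≠ 0 := by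
      have h01 : (![0, 1] : Fin 2 → K) ≠ 0 := by
        intro h0; have := congrFun h0 1; simpa using this
      have := noroot ![0, 1] h01
      simpa using this
    have hpair : ∀ i : Fin 2, (y i 0 0 ≠ 0 ∧ y i 1 1 ≠ 0) ∨ (y i 0 1 ≠ 0 ∧ y i 1 0 ≠ 0) := by
      intro i
      have hdi : (y i).det ≠ 0 := by fin_cases i; exacts [hd0, hd1]
      rw [Matrix.det_fin_two] at hdi
      by_cases h1 : y i 0 0 * y i 1 1 = 0
      · right
        have h2 : y i 0 1 * y i 1 0 ≠ 0 := by
          intro h2; exact hdi (by rw [h1, h2, sub_zero])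
        exact mul_ne_zero_iff.mp h2
      · left; exact mul_ne_zero_iff.mp h1
    have hUR : y 0 0 0 ≠ 0 → y 1 0 0 ≠ 0 → ∃ i : Fin 2, y i 0 1 ≠ 0 := by
      intro ha hb
      by_contra hc
      push_neg at hc
      exact noroot ![y 1 0 0, -(y 0 0 0)]
        (fun h0 => ha (by have := congrFun h0 1; simpa using this))
        (by rw [Matrix.det_fin_two]
            simp only [Matrix.add_apply, Matrix.smul_apply, smul_eq_mul,
              Matrix.cons_val_zero, Matrix.cons_val_one, Matrix.head_cons, hc 0, hc 1]
            ring)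
    have hLL : y 0 1 1 ≠ 0 → y 1 1 1 ≠ 0 → ∃ i : Fin 2, y i 1 0 ≠ 0 := by
      intro ha hb
      by_contra hc
      push_neg at hc
      exact noroot ![y 1 1 1, -(y 0 1 1)]
        (fun h0 => ha (by have := congrFun h0 1; simpa using this))
        (by rw [Matrix.det_fin_two]
            simp only [Matrix.add_apply, Matrix.smul_apply, smul_eq_mul,
              Matrix.cons_val_zero, Matrix.cons_val_one, Matrix.head_cons, hc 0, hc 1]
            ring)
    have hTL : y 0 0 1 ≠ 0 → y 1 0 1 ≠ 0 → ∃ i : Fin 2, y i 0 0 ≠ 0 := by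
      intro ha hb
      by_contra hc
      push_neg at hc
      exact noroot ![y 1 0 1, -(y 0 0 1)]
        (fun h0 => ha (by have := congrFun h0 1; simpa using this))
        (by rw [Matrix.det_fin_two]
            simp only [Matrix.add_apply, Matrix.smul_apply, smul_eq_mul,
              Matrix.cons_val_zero, Matrix.cons_val_one, Matrix.head_cons, hc 0, hc 1]
            ring)
    have hBR : y 0 1 0 ≠ 0 → y 1 1 0 ≠ 0 → ∃ i : Fin 2, y i 1 1 ≠ 0 := by
      intro ha hb
      by_contra hc
      push_neg at hc
      exact noroot ![y 1 1 0, -(y 0 1 0)]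
        (fun h0 => ha (by have := congrFun h0 1; simpa using this))
        (by rw [Matrix.det_fin_two]
            simp only [Matrix.add_apply, Matrix.smul_apply, smul_eq_mul,
              Matrix.cons_val_zero, Matrix.cons_val_one, Matrix.head_cons, hc 0, hc 1]
            ring)
    apply nhds_of_pm_basis
    rcases hpair 0 with ⟨h000, h011⟩ | ⟨h001, h010⟩ <;>
      rcases hpair 1 with ⟨h100, h111⟩ | ⟨h101, h110⟩
    · obtain ⟨iu, hiu⟩ := hUR h000 h100
      obtain ⟨il, hil⟩ := hLL h011 h111
      fin_cases iu <;> fin_cases il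
      · intro bi
        fin_cases bi <;> refine ⟨?_, ?_⟩
        · exact mem_hull_pair (hmem 1 0 0 h100) (hmem 0 0 1 hiu) (by funext jj; fin_cases jj <;> norm_num [Fin.ext_iff])
        · exact mem_hull_pair (hmem 1 1 1 h111) (hmem 0 1 0 hil) (by funext jj; fin_cases jj <;> norm_num [Fin.ext_iff])
        · exact mem_hull_pair (hmem 1 0 0 h100) (hmem 0 1 0 hil) (by funext jj; fin_cases jj <;> norm_num [Fin.ext_iff])
        · exact mem_hull_pair (hmem 1 1 1 h111) (hmem 0 0 1 hiu) (by funext jj; fin_cases jj <;> norm_num [Fin.ext_iff])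
        · exact mem_hull_pair (hmem 0 0 0 h000) (hmem 0 1 1 h011) (by funext jj; fin_cases jj <;> norm_num [Fin.ext_iff])
        · exact mem_hull_pair (hmem 1 0 0 h100) (hmem 1 1 1 h111) (by funext jj; fin_cases jj <;> norm_num [Fin.ext_iff])
      · intro bi
        fin_cases bi <;> refine ⟨?_, ?_⟩
        · exact mem_hull_pair (hmem 1 0 0 h100) (hmem 0 0 1 hiu) (by funext jj; fin_cases jj <;> norm_num [Fin.ext_iff])
        · exact mem_hull_pair (hmem 0 1 1 h011) (hmem 1 1 0 hil) (by funext jj; fin_cases jj <;> norm_num [Fin.ext_iff])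
        · exact mem_hull_pair (hmem 0 0 0 h000) (hmem 1 1 0 hil) (by funext jj; fin_cases jj <;> norm_num [Fin.ext_iff])
        · exact mem_hull_pair (hmem 1 1 1 h111) (hmem 0 0 1 hiu) (by funext jj; fin_cases jj <;> norm_num [Fin.ext_iff])
        · exact mem_hull_pair (hmem 0 0 0 h000) (hmem 0 1 1 h011) (by funext jj; fin_cases jj <;> norm_num [Fin.ext_iff])
        · exact mem_hull_pair (hmem 1 0 0 h100) (hmem 1 1 1 h111) (by funext jj; fin_cases jj <;> norm_num [Fin.ext_iff])
      · intro bi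
        fin_cases bi <;> refine ⟨?_, ?_⟩
        · exact mem_hull_pair (hmem 0 0 0 h000) (hmem 1 0 1 hiu) (by funext jj; fin_cases jj <;> norm_num [Fin.ext_iff])
        · exact mem_hull_pair (hmem 1 1 1 h111) (hmem 0 1 0 hil) (by funext jj; fin_cases jj <;> norm_num [Fin.ext_iff])
        · exact mem_hull_pair (hmem 1 0 0 h100) (hmem 0 1 0 hil) (by funext jj; fin_cases jj <;> norm_num [Fin.ext_iff])
        · exact mem_hull_pair (hmem 0 1 1 h011) (hmem 1 0 1 hiu) (by funext jj; fin_cases jj <;> norm_num [Fin.ext_iff])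
        · exact mem_hull_pair (hmem 0 0 0 h000) (hmem 0 1 1 h011) (by funext jj; fin_cases jj <;> norm_num [Fin.ext_iff])
        · exact mem_hull_pair (hmem 1 0 0 h100) (hmem 1 1 1 h111) (by funext jj; fin_cases jj <;> norm_num [Fin.ext_iff])
      · intro bi
        fin_cases bi <;> refine ⟨?_, ?_⟩
        · exact mem_hull_pair (hmem 0 0 0 h000) (hmem 1 0 1 hiu) (by funext jj; fin_cases jj <;> norm_num [Fin.ext_iff])
        · exact mem_hull_pair (hmem 0 1 1 h011) (hmem 1 1 0 hil) (by funext jj; fin_cases jj <;> norm_num [Fin.ext_iff])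
        · exact mem_hull_pair (hmem 0 0 0 h000) (hmem 1 1 0 hil) (by funext jj; fin_cases jj <;> norm_num [Fin.ext_iff])
        · exact mem_hull_pair (hmem 0 1 1 h011) (hmem 1 0 1 hiu) (by funext jj; fin_cases jj <;> norm_num [Fin.ext_iff])
        · exact mem_hull_pair (hmem 0 0 0 h000) (hmem 0 1 1 h011) (by funext jj; fin_cases jj <;> norm_num [Fin.ext_iff])
        · exact mem_hull_pair (hmem 1 0 0 h100) (hmem 1 1 1 h111) (by funext jj; fin_cases jj <;> norm_num [Fin.ext_iff])
    · intro bi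
      fin_cases bi <;> refine ⟨?_, ?_⟩
      · exact mem_hull_pair (hmem 0 0 0 h000) (hmem 1 0 1 h101) (by funext jj; fin_cases jj <;> norm_num [Fin.ext_iff])
      · exact mem_hull_pair (hmem 0 1 1 h011) (hmem 1 1 0 h110) (by funext jj; fin_cases jj <;> norm_num [Fin.ext_iff])
      · exact mem_hull_pair (hmem 0 0 0 h000) (hmem 1 1 0 h110) (by funext jj; fin_cases jj <;> norm_num [Fin.ext_iff])
      · exact mem_hull_pair (hmem 0 1 1 h011) (hmem 1 0 1 h101) (by funext jj; fin_cases jj <;> norm_num [Fin.ext_iff])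
      · exact mem_hull_pair (hmem 0 0 0 h000) (hmem 0 1 1 h011) (by funext jj; fin_cases jj <;> norm_num [Fin.ext_iff])
      · exact mem_hull_pair (hmem 1 0 1 h101) (hmem 1 1 0 h110) (by funext jj; fin_cases jj <;> norm_num [Fin.ext_iff])
    · intro bi
      fin_cases bi <;> refine ⟨?_, ?_⟩
      · exact mem_hull_pair (hmem 0 0 1 h001) (hmem 1 0 0 h100) (by funext jj; fin_cases jj <;> norm_num [Fin.ext_iff])
      · exact mem_hull_pair (hmem 0 1 0 h010) (hmem 1 1 1 h111) (by funext jj; fin_cases jj <;> norm_num [Fin.ext_iff])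
      · exact mem_hull_pair (hmem 0 1 0 h010) (hmem 1 0 0 h100) (by funext jj; fin_cases jj <;> norm_num [Fin.ext_iff])
      · exact mem_hull_pair (hmem 0 0 1 h001) (hmem 1 1 1 h111) (by funext jj; fin_cases jj <;> norm_num [Fin.ext_iff])
      · exact mem_hull_pair (hmem 0 0 1 h001) (hmem 0 1 0 h010) (by funext jj; fin_cases jj <;> norm_num [Fin.ext_iff])
      · exact mem_hull_pair (hmem 1 0 0 h100) (hmem 1 1 1 h111) (by funext jj; fin_cases jj <;> norm_num [Fin.ext_iff])
    · obtain ⟨ia, hia⟩ := hTL h001 h101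
      obtain ⟨ib, hib⟩ := hBR h010 h110
      fin_cases ia <;> fin_cases ib
      · intro bi
        fin_cases bi <;> refine ⟨?_, ?_⟩
        · exact mem_hull_pair (hmem 1 0 1 h101) (hmem 0 0 0 hia) (by funext jj; fin_cases jj <;> norm_num [Fin.ext_iff])
        · exact mem_hull_pair (hmem 1 1 0 h110) (hmem 0 1 1 hib) (by funext jj; fin_cases jj <;> norm_num [Fin.ext_iff])
        · exact mem_hull_pair (hmem 1 1 0 h110) (hmem 0 0 0 hia) (by funext jj; fin_cases jj <;> norm_num [Fin.ext_iff])
        · exact mem_hull_pair (hmem 1 0 1 h101) (hmem 0 1 1 hib) (by funext jj; fin_cases jj <;> norm_num [Fin.ext_iff])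
        · exact mem_hull_pair (hmem 0 0 1 h001) (hmem 0 1 0 h010) (by funext jj; fin_cases jj <;> norm_num [Fin.ext_iff])
        · exact mem_hull_pair (hmem 1 0 1 h101) (hmem 1 1 0 h110) (by funext jj; fin_cases jj <;> norm_num [Fin.ext_iff])
      · intro bi
        fin_cases bi <;> refine ⟨?_, ?_⟩
        · exact mem_hull_pair (hmem 1 0 1 h101) (hmem 0 0 0 hia) (by funext jj; fin_cases jj <;> norm_num [Fin.ext_iff])
        · exact mem_hull_pair (hmem 0 1 0 h010) (hmem 1 1 1 hib) (by funext jj; fin_cases jj <;> norm_num [Fin.ext_iff])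
        · exact mem_hull_pair (hmem 1 1 0 h110) (hmem 0 0 0 hia) (by funext jj; fin_cases jj <;> norm_num [Fin.ext_iff])
        · exact mem_hull_pair (hmem 0 0 1 h001) (hmem 1 1 1 hib) (by funext jj; fin_cases jj <;> norm_num [Fin.ext_iff])
        · exact mem_hull_pair (hmem 0 0 1 h001) (hmem 0 1 0 h010) (by funext jj; fin_cases jj <;> norm_num [Fin.ext_iff])
        · exact mem_hull_pair (hmem 1 0 1 h101) (hmem 1 1 0 h110) (by funext jj; fin_cases jj <;> norm_num [Fin.ext_iff])
      · intro bi
        fin_cases bi <;> refine ⟨?_, ?_⟩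
        · exact mem_hull_pair (hmem 0 0 1 h001) (hmem 1 0 0 hia) (by funext jj; fin_cases jj <;> norm_num [Fin.ext_iff])
        · exact mem_hull_pair (hmem 1 1 0 h110) (hmem 0 1 1 hib) (by funext jj; fin_cases jj <;> norm_num [Fin.ext_iff])
        · exact mem_hull_pair (hmem 0 1 0 h010) (hmem 1 0 0 hia) (by funext jj; fin_cases jj <;> norm_num [Fin.ext_iff])
        · exact mem_hull_pair (hmem 1 0 1 h101) (hmem 0 1 1 hib) (by funext jj; fin_cases jj <;> norm_num [Fin.ext_iff])
        · exact mem_hull_pair (hmem 0 0 1 h001) (hmem 0 1 0 h010) (by funext jj; fin_cases jj <;> norm_num [Fin.ext_iff])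
        · exact mem_hull_pair (hmem 1 0 1 h101) (hmem 1 1 0 h110) (by funext jj; fin_cases jj <;> norm_num [Fin.ext_iff])
      · intro bi
        fin_cases bi <;> refine ⟨?_, ?_⟩
        · exact mem_hull_pair (hmem 0 0 1 h001) (hmem 1 0 0 hia) (by funext jj; fin_cases jj <;> norm_num [Fin.ext_iff])
        · exact mem_hull_pair (hmem 0 1 0 h010) (hmem 1 1 1 hib) (by funext jj; fin_cases jj <;> norm_num [Fin.ext_iff])
        · exact mem_hull_pair (hmem 0 1 0 h010) (hmem 1 0 0 hia) (by funext jj; fin_cases jj <;> norm_num [Fin.ext_iff])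
        · exact mem_hull_pair (hmem 0 0 1 h001) (hmem 1 1 1 hib) (by funext jj; fin_cases jj <;> norm_num [Fin.ext_iff])
        · exact mem_hull_pair (hmem 0 0 1 h001) (hmem 0 1 0 h010) (by funext jj; fin_cases jj <;> norm_num [Fin.ext_iff])
        · exact mem_hull_pair (hmem 1 0 1 h101) (hmem 1 1 0 h110) (by funext jj; fin_cases jj <;> norm_num [Fin.ext_iff])
  · intro hstab
    by_contra hirr
    obtain ⟨u, hune, hroot⟩ := root_of_not_irr hirr
    have hdetSm : ((u 0 • x 0 + u 1 • x 1 : Matrix (Fin 2) (Fin 2) K)).det = 0 := by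
      rw [det_pair]; exact hroot
    set Sm : Matrix (Fin 2) (Fin 2) K := u 0 • x 0 + u 1 • x 1 with hSm
    have hdet2 : Sm 0 0 * Sm 1 1 - Sm 0 1 * Sm 1 0 = 0 := by
      rw [← Matrix.det_fin_two]; exact hdetSm
    obtain ⟨G3, hG3det, hG30, hG31⟩ :
        ∃ G3 : Matrix (Fin 2) (Fin 2) K, G3.det ≠ 0 ∧ G3 1 0 = u 0 ∧ G3 1 1 = u 1 := by
      rcases (show u 0 ≠ 0 ∨ u 1 ≠ 0 by
          by_contra hcon
          push_neg at hcon
          exact hune (by funext i; fin_cases i <;> simp [hcon.1, hcon.2])) with h0 | h1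
      · refine ⟨!![0, 1; u 0, u 1], ?_, by simp, by simp⟩
        rw [Matrix.det_fin_two_of]; simpa using h0
      · refine ⟨!![1, 0; u 0, u 1], ?_, by simp, by simp⟩
        rw [Matrix.det_fin_two_of]; simpa using h1
    obtain ⟨G1, hG1det, hG1row⟩ :
        ∃ G1 : Matrix (Fin 2) (Fin 2) K, G1.det ≠ 0 ∧ ∀ l, (G1 * Sm) 1 l = 0 := by
      by_cases h00 : Sm 0 0 ≠ 0
      · refine ⟨!![1, 0; Sm 1 0, -(Sm 0 0)], ?_, ?_⟩
        · rw [Matrix.det_fin_two_of]; simpa using h00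
        · intro l
          fin_cases l <;>
            · simp only [Matrix.mul_apply, Fin.sum_univ_two, Matrix.cons_val_zero,
                Matrix.cons_val_one, Matrix.head_cons, Fin.zero_eta, Fin.mk_one, Matrix.of_apply]
              first
              | linear_combination -hdet2
              | linear_combination hdet2
              | ring
      by_cases h10 : Sm 1 0 ≠ 0
      · refine ⟨!![0, 1; Sm 1 0, -(Sm 0 0)], ?_, ?_⟩
        · rw [Matrix.det_fin_two_of]; simpa using h10
        · intro l
          fin_cases l <;>
            · simp only [Matrix.mul_apply, Fin.sum_univ_two, Matrix.cons_val_zero,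
                Matrix.cons_val_one, Matrix.head_cons, Fin.zero_eta, Fin.mk_one, Matrix.of_apply]
              first
              | linear_combination -hdet2
              | linear_combination hdet2
              | ring
      by_cases h01 : Sm 0 1 ≠ 0
      · refine ⟨!![1, 0; Sm 1 1, -(Sm 0 1)], ?_, ?_⟩
        · rw [Matrix.det_fin_two_of]; simpa using h01
        · intro l
          fin_cases l <;>
            · simp only [Matrix.mul_apply, Fin.sum_univ_two, Matrix.cons_val_zero,
                Matrix.cons_val_one, Matrix.head_cons, Fin.zero_eta, Fin.mk_one, Matrix.of_apply]
              first
              | linear_combination -hdet2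
              | linear_combination hdet2
              | ring
      by_cases h11 : Sm 1 1 ≠ 0
      · refine ⟨!![0, 1; Sm 1 1, -(Sm 0 1)], ?_, ?_⟩
        · rw [Matrix.det_fin_two_of]; simpa using h11
        · intro l
          fin_cases l <;>
            · simp only [Matrix.mul_apply, Fin.sum_univ_two, Matrix.cons_val_zero,
                Matrix.cons_val_one, Matrix.head_cons, Fin.zero_eta, Fin.mk_one, Matrix.of_apply]
              first
              | linear_combination -hdet2
              | linear_combination hdet2
              | ring
      push_neg at h00 h10 h01 h11
      refine ⟨1, by simp, ?_⟩
      intro l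
      fin_cases l <;>
        simp [Matrix.mul_apply, Fin.sum_univ_two, h00, h10, h01, h11]
    set g1 : GL (Fin 2) K := Matrix.GeneralLinearGroup.mkOfDetNeZero G1 hG1det with hg1
    set g3 : GL (Fin 2) K := Matrix.GeneralLinearGroup.mkOfDetNeZero G3 hG3det with hg3
    have hmemn := hstab g1 1 g3
    have hcoe1 : (g1 : Matrix (Fin 2) (Fin 2) K) = G1 := rfl
    have hcoe3 : (g3 : Matrix (Fin 2) (Fin 2) K) = G3 := rfl
    set H : Set (Fin 3 → ℝ) := {w | 0 ≤ w 0 + w 2} with hH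
    have hconv : Convex ℝ H := by
      intro p hp q hq a b ha hb hab
      simp only [hH, Set.mem_setOf_eq] at hp hq ⊢
      simp only [Pi.add_apply, Pi.smul_apply, smul_eq_mul]
      nlinarith [mul_nonneg ha hp, mul_nonneg hb hq]
    have hsub : convexHull ℝ
        {w : Fin 3 → ℝ | ∃ i j l : Fin 2,
          ((g1 : Matrix (Fin 2) (Fin 2) K) *
              (∑ j', (g3 : Matrix (Fin 2) (Fin 2) K) i j' • x j') *
              ((1 : GL (Fin 2) K) : Matrix (Fin 2) (Fin 2) K)ᵀ) j l ≠ 0 ∧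
            w = ![if j = 0 then (1 : ℝ) else -1, if l = 0 then (1 : ℝ) else -1,
              if i = 0 then (1 : ℝ) else -1]} ⊆ H := by
      apply convexHull_min ?_ hconv
      rintro w ⟨i, j, l, hne, rfl⟩
      simp only [hH, Set.mem_setOf_eq]
      by_cases hij : i = 1 ∧ j = 1
      · exfalso
        apply hne
        rw [hij.1, hij.2, hcoe1, hcoe3]
        have hsum : (∑ j', G3 1 j' • x j') = Sm := by
          rw [Fin.sum_univ_two, hG30, hG31, hSm]
        rw [hsum]
        have : ((1 : GL (Fin 2) K) : Matrix (Fin 2) (Fin 2) K) = 1 := rfl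
        rw [this, Matrix.transpose_one, Matrix.mul_one]
        exact hG1row l
      · have : ¬(i = 1 ∧ j = 1) := hij
        fin_cases i <;> fin_cases j <;> simp_all <;> norm_num
    obtain ⟨ε, hε, hball⟩ := Metric.mem_nhds_iff.mp hmemn
    set p : Fin 3 → ℝ := ![-(ε / 2), 0, 0] with hp
    have hpball : p ∈ Metric.ball (0 : Fin 3 → ℝ) ε := by
      rw [Metric.mem_ball, dist_pi_lt_iff hε]
      intro b
      fin_cases b
      · show dist (-(ε / 2) : ℝ) 0 < ε
        rw [Real.dist_eq, sub_zero, abs_lt]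
        constructor <;> linarith
      · show dist (0 : ℝ) 0 < ε
        simpa using hε
      · show dist (0 : ℝ) 0 < ε
        simpa using hε
    have hpH := hsub (hball hpball)
    have hfinal : (0 : ℝ) ≤ -(ε / 2) + 0 := hpH
    linarith
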